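/- Let k ≥ 1 be an integer and u₁ < u₂ < … < u_k real numbers. The function ρ is 𝔅-Lipschitz with respect to the supremum norm: for all f¹, f² ∈ ℝ^k, |ρ(f¹) − ρ(f²)| ≤ (u_k − u₁) · max_{1≤i≤k} |f¹_i − f²_i|. -/

import Mathlib

open scoped BigOperators

/-- Fix an integer `k ≥ 1` and real numbers `u 0 < u 1 < … < u (k-1)`;
set `𝔅 = u (k-1) - u 0`.  With `softmax f i = exp (f i) / ∑ j exp (f j)` and
`ρ f = ∑ i, u i * softmax f i`, the function `ρ` is `𝔅`-Lipschitz with respect to the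
supremum norm: for all `f¹, f² ∈ ℝ^k`,
`|ρ f¹ - ρ f²| ≤ (u (k-1) - u 0) * max_i |f¹ i - f² i|`. -/
theorem stmt_1 (k : ℕ) (hk : 0 < k) (u : Fin k → ℝ) (hu : StrictMono u)
    (softmax : (Fin k → ℝ) → Fin k → ℝ)
    (hsm : ∀ f i, softmax f i = Real.exp (f i) / ∑ j, Real.exp (f j))
    (ρ : (Fin k → ℝ) → ℝ)
    (hρ : ∀ f, ρ f = ∑ i, u i * softmax f i)
    (f₁ f₂ : Fin k → ℝ) :
    |ρ f₁ - ρ f₂| ≤ (u ⟨k - 1, by omega⟩ - u ⟨0, hk⟩) * ⨆ i : Fin k, |f₁ i - f₂ i| := by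
  haveI : Nonempty (Fin k) := ⟨⟨0, hk⟩⟩
  set B : ℝ := u ⟨k - 1, by omega⟩ - u ⟨0, hk⟩ with hBdef
  set M : ℝ := ⨆ i : Fin k, |f₁ i - f₂ i| with hMdef
  set v : Fin k → ℝ := fun i => f₁ i - f₂ i with hvdef
  have hMv : ∀ i, |v i| ≤ M := fun i => le_ciSup (f := fun i : Fin k => |f₁ i - f₂ i|) (Set.Finite.bddAbove (Set.finite_range _)) i
  have hM0 : 0 ≤ M := (abs_nonneg _).trans (hMv ⟨0, hk⟩)
  have huB : ∀ i j : Fin k, |u i - u j| ≤ B := by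
    intro i j
    have hlo : ∀ m : Fin k, u ⟨0, hk⟩ ≤ u m := fun m => hu.monotone (by simp [Fin.le_def])
    have hhi : ∀ m : Fin k, u m ≤ u ⟨k - 1, by omega⟩ := fun m =>
      hu.monotone (by simp [Fin.le_def]; omega)
    rw [abs_sub_le_iff]
    constructor <;> [skip; skip] <;>
      · have := hlo i; have := hlo j; have := hhi i; have := hhi j; simp [hBdef]; linarith
  have hB0 : 0 ≤ B := by simpa using huB ⟨0, hk⟩ ⟨0, hk⟩
  set E : ℝ → Fin k → ℝ := fun t i => Real.exp (f₂ i + t * v i) with hEdef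
  set D : ℝ → ℝ := fun t => ∑ i, E t i with hDdef
  set N : ℝ → ℝ := fun t => ∑ i, u i * E t i with hNdef
  set N' : ℝ → ℝ := fun t => ∑ i, u i * (v i * E t i) with hN'def
  set D' : ℝ → ℝ := fun t => ∑ i, v i * E t i with hD'def
  have hEpos : ∀ t i, 0 < E t i := fun t i => Real.exp_pos _
  have hD : ∀ t, 0 < D t := fun t =>
    Finset.sum_pos (fun i _ => hEpos t i) Finset.univ_nonempty
  set g : ℝ → ℝ := fun t => N t / D t with hgdef
  -- ρ f = g at endpoints
  have key : ∀ (f : Fin k → ℝ) (t : ℝ), (∀ i, E t i = Real.exp (f i)) → ρ f = g t := by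
    intro f t h
    have hDt : D t = ∑ j, Real.exp (f j) := by
      simp only [hDdef, h]
    rw [hρ, hgdef, hNdef]
    simp only [hsm, ← hDt, h]
    rw [Finset.sum_div]
    exact Finset.sum_congr rfl fun i _ => (mul_div_assoc _ _ _).symm
  have h1 : ρ f₁ = g 1 := key f₁ 1 (fun i => by simp [hEdef, hvdef])
  have h2 : ρ f₂ = g 0 := key f₂ 0 (fun i => by simp [hEdef])
  -- derivatives
  have hE : ∀ t i, HasDerivAt (fun s => E s i) (v i * E t i) t := by
    intro t i
    have h : HasDerivAt (fun s : ℝ => f₂ i + s * v i) (v i) t := by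
      simpa using ((hasDerivAt_id t).mul_const (v i)).const_add (f₂ i)
    simpa [hEdef, mul_comm] using h.exp
  have hN : ∀ t, HasDerivAt N (N' t) t := fun t =>
    HasDerivAt.fun_sum fun i _ => (hE t i).const_mul (u i)
  have hDd : ∀ t, HasDerivAt D (D' t) t := fun t =>
    HasDerivAt.fun_sum fun i _ => hE t i
  have hg : ∀ t, HasDerivAt g ((N' t * D t - N t * D' t) / D t ^ 2) t := fun t =>
    (hN t).div (hDd t) (hD t).ne'
  -- bound on derivative
  have hbound : ∀ t : ℝ, |(N' t * D t - N t * D' t) / D t ^ 2| ≤ B * M := by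
    intro t
    have hD2 : (0:ℝ) < D t ^ 2 := pow_pos (hD t) 2
    rw [abs_div, abs_of_pos hD2, div_le_iff₀ hD2]
    have expand : N' t * D t - N t * D' t = ∑ i, v i * E t i * (u i * D t - N t) := by
      rw [hN'def, hD'def, Finset.sum_mul, Finset.mul_sum, ← Finset.sum_sub_distrib]
      exact Finset.sum_congr rfl fun i _ => by ring
    have hterm : ∀ i : Fin k, |u i * D t - N t| ≤ B * D t := by
      intro i
      have : u i * D t - N t = ∑ j, (u i - u j) * E t j := by
        rw [hDdef, hNdef, Finset.mul_sum, ← Finset.sum_sub_distrib]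
        exact Finset.sum_congr rfl fun j _ => by ring
      rw [this]
      calc |∑ j, (u i - u j) * E t j| ≤ ∑ j, |(u i - u j) * E t j| :=
            Finset.abs_sum_le_sum_abs _ _
        _ ≤ ∑ j, B * E t j := by
            refine Finset.sum_le_sum fun j _ => ?_
            rw [abs_mul, abs_of_pos (hEpos t j)]
            exact mul_le_mul_of_nonneg_right (huB i j) (hEpos t j).le
        _ = B * D t := by rw [hDdef, Finset.mul_sum]
    calc |N' t * D t - N t * D' t| = |∑ i, v i * E t i * (u i * D t - N t)| := by rw [expand]
      _ ≤ ∑ i, |v i * E t i * (u i * D t - N t)| := Finset.abs_sum_le_sum_abs _ _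
      _ ≤ ∑ i, M * (B * D t) * E t i := by
          refine Finset.sum_le_sum fun i _ => ?_
          rw [abs_mul, abs_mul, abs_of_pos (hEpos t i)]
          calc |v i| * E t i * |u i * D t - N t| ≤ M * E t i * (B * D t) := by
                refine mul_le_mul ?_ (hterm i) (abs_nonneg _) ?_
                · exact mul_le_mul_of_nonneg_right (hMv i) (hEpos t i).le
                · positivity
            _ = M * (B * D t) * E t i := by ring
      _ = M * (B * D t) * D t := by rw [hDdef, ← Finset.mul_sum]
      _ = B * M * D t ^ 2 := by ring
  -- MVT
  have := norm_image_sub_le_of_norm_deriv_le_segment_01'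
    (f := g) (f' := fun t => (N' t * D t - N t * D' t) / D t ^ 2) (C := B * M)
    (fun x _ => (hg x).hasDerivWithinAt) (fun x _ => hbound x)
  rw [h1, h2]
  simpa [Real.norm_eq_abs] using this
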